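/- Let X and Y be random variables on a finite probability space. For any c > 0, H_c(X,Y) ≤ H_c(X) + H_c(Y). -/

import Mathlib

open Real

/-- Joint t-entropy of a joint pmf `p : Fin n → Fin m → ℝ`. -/
noncomputable def tEntropyJoint {n m : ℕ} (c : ℝ) (p : Fin n → Fin m → ℝ) : ℝ :=
  (∑ i, ∑ j, p i j * Real.arctan ((p i j) ^ (-c))) - Real.pi / 4

/-- t-entropy of the first marginal of a joint pmf. -/
noncomputable def tEntropyMargX {n m : ℕ} (c : ℝ) (p : Fin n → Fin m → ℝ) : ℝ :=
  (∑ i, (∑ j, p i j) * Real.arctan ((∑ j, p i j) ^ (-c))) - Real.pi / 4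

/-- t-entropy of the second marginal of a joint pmf. -/
noncomputable def tEntropyMargY {n m : ℕ} (c : ℝ) (p : Fin n → Fin m → ℝ) : ℝ :=
  (∑ j, (∑ i, p i j) * Real.arctan ((∑ i, p i j) ^ (-c))) - Real.pi / 4

/-- Key arctan inequality for arguments in `(0, 1]`. -/
lemma tEntropy_arctan_key {u v : ℝ} (hu0 : 0 < u) (hu1 : u ≤ 1) (hv0 : 0 < v) (hv1 : v ≤ 1) :
    arctan u + arctan v ≤ π / 4 + arctan (u * v) := by
  rcases lt_or_eq_of_le (show u * v ≤ 1 from mul_le_one₀ hu1 hv0.le hv1) with h | h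
  · rw [arctan_add h]
    have h2 : (1 : ℝ) * (u * v) < 1 := by nlinarith
    have h3 : π / 4 + arctan (u * v) = arctan 1 + arctan (u * v) := by rw [arctan_one]
    rw [h3, arctan_add h2]
    apply arctan_strictMono.monotone
    rw [one_mul, div_le_div_iff_of_pos_right (by linarith)]
    nlinarith
  · have hu : u = 1 := by nlinarith
    have hv : v = 1 := by nlinarith
    simp [hu, hv, arctan_one]

/-- Key arctan inequality for arguments in `[1, ∞)`. -/
lemma tEntropy_arctan_key' {x y : ℝ} (hx : 1 ≤ x) (hy : 1 ≤ y) :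
    arctan (x * y) + π / 4 ≤ arctan x + arctan y := by
  have hx0 : 0 < x := lt_of_lt_of_le one_pos hx
  have hy0 : 0 < y := lt_of_lt_of_le one_pos hy
  have h := tEntropy_arctan_key (inv_pos.mpr hx0) (inv_le_one_of_one_le₀ hx)
    (inv_pos.mpr hy0) (inv_le_one_of_one_le₀ hy)
  rw [arctan_inv_of_pos hx0, arctan_inv_of_pos hy0, ← mul_inv,
    arctan_inv_of_pos (mul_pos hx0 hy0)] at h
  linarith

lemma tEntropy_hasDerivG {c : ℝ} (x : ℝ) (hx : 0 < x) :
    HasDerivAt (fun u : ℝ => u * arctan (u ^ c))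
      (arctan (x ^ c) + c * x ^ c / (1 + (x ^ c) ^ 2)) x := by
  have h1 : HasDerivAt (fun u : ℝ => u ^ c) (c * x ^ (c - 1)) x :=
    Real.hasDerivAt_rpow_const (Or.inl hx.ne')
  have h2 : HasDerivAt (fun u : ℝ => arctan (u ^ c))
      (1 / (1 + (x ^ c) ^ 2) * (c * x ^ (c - 1))) x :=
    by have := (Real.hasDerivAt_arctan (x ^ c)).comp x h1; exact this
  have h3 : HasDerivAt (fun u : ℝ => u * arctan (u ^ c))
      (1 * arctan (x ^ c) + id x * (1 / (1 + (x ^ c) ^ 2) * (c * x ^ (c - 1)))) x :=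
    (hasDerivAt_id x).mul h2
  have hxc : x ^ c = x * x ^ (c - 1) := by
    rw [show c = 1 + (c - 1) by ring, Real.rpow_add hx, Real.rpow_one]
    ring_nf
  convert h3 using 1
  rw [id_eq, one_mul]
  rw [hxc]
  have hpos : (0:ℝ) < 1 + (x * x ^ (c-1)) ^ 2 := by positivity
  field_simp

lemma tEntropy_convexG {c : ℝ} (hc : 0 < c) :
    ConvexOn ℝ (Set.Icc (0:ℝ) 1) (fun u : ℝ => u * arctan (u ^ c)) := by
  apply MonotoneOn.convexOn_of_deriv (convex_Icc 0 1)
  · exact continuousOn_id.mul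
      (Real.continuous_arctan.comp_continuousOn
        (continuousOn_id.rpow_const fun x _ => Or.inr hc.le))
  · rw [interior_Icc]
    intro x hx
    exact (tEntropy_hasDerivG x hx.1).differentiableAt.differentiableWithinAt
  · rw [interior_Icc]
    intro a ha b hb hab
    rw [(tEntropy_hasDerivG a ha.1).deriv, (tEntropy_hasDerivG b hb.1).deriv]
    have hv : a ^ c ≤ b ^ c := Real.rpow_le_rpow ha.1.le hab hc.le
    have hv0 : 0 < a ^ c := Real.rpow_pos_of_pos ha.1 c
    have hw1 : b ^ c ≤ 1 := Real.rpow_le_one hb.1.le hb.2.le hc.le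
    have h1 : arctan (a ^ c) ≤ arctan (b ^ c) := arctan_strictMono.monotone hv
    have h2 : c * a ^ c / (1 + (a ^ c) ^ 2) ≤ c * b ^ c / (1 + (b ^ c) ^ 2) := by
      rw [div_le_div_iff₀ (by positivity) (by positivity)]
      nlinarith [mul_nonneg (mul_nonneg hc.le (sub_nonneg.2 hv))
        (sub_nonneg.2 (show a ^ c * b ^ c ≤ 1 from
          mul_le_one₀ (hv.trans hw1) (hv0.le.trans hv) hw1))]
    linarith

lemma tEntropy_concaveF {c : ℝ} (hc : 0 < c) :
    ConcaveOn ℝ (Set.Icc (0:ℝ) 1) (fun u : ℝ => u * arctan (u ^ (-c))) := by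
  have hg := tEntropy_convexG hc
  have heq : ∀ u ∈ Set.Icc (0:ℝ) 1,
      u * arctan (u ^ (-c)) = π / 2 * u - u * arctan (u ^ c) := by
    intro u hu
    rcases eq_or_lt_of_le hu.1 with h | h
    · rw [← h, Real.zero_rpow (by simpa using hc.ne'), Real.zero_rpow hc.ne']
      simp
    · rw [Real.rpow_neg h.le, arctan_inv_of_pos (Real.rpow_pos_of_pos h c)]
      ring
  refine ⟨convex_Icc 0 1, fun x hx y hy a b ha hb hab => ?_⟩
  have hmem := (convex_Icc (0:ℝ) 1) hx hy ha hb hab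
  have h2 := hg.2 hx hy ha hb hab
  simp only [smul_eq_mul] at *
  rw [heq x hx, heq y hy, heq _ hmem]
  nlinarith [h2]

lemma tEntropy_step1 {c : ℝ} (hc : 0 < c) {a P : ℝ} (h0 : 0 ≤ a) (hle : a ≤ P) (hP1 : P ≤ 1) :
    a * arctan (a ^ (-c)) ≤
      a * arctan (P ^ (-c)) + P * ((a / P) * arctan ((a / P) ^ (-c))) - a * (π / 4) := by
  rcases eq_or_lt_of_le h0 with h | h
  · simp [← h, zero_div]
  · have hP : 0 < P := lt_of_lt_of_le h hle
    set t := a / P with ht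
    have ht0 : 0 < t := div_pos h hP
    have ht1 : t ≤ 1 := (div_le_one hP).mpr hle
    have hPt : P * t = a := mul_div_cancel₀ a hP.ne'
    have hx : (1:ℝ) ≤ P ^ (-c) :=
      Real.one_le_rpow_of_pos_of_le_one_of_nonpos hP hP1 (by linarith)
    have hy : (1:ℝ) ≤ t ^ (-c) :=
      Real.one_le_rpow_of_pos_of_le_one_of_nonpos ht0 ht1 (by linarith)
    have hmul : P ^ (-c) * t ^ (-c) = a ^ (-c) := by
      rw [← Real.mul_rpow hP.le ht0.le, hPt]
    have key := tEntropy_arctan_key' hx hy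
    rw [hmul] at key
    have h2 : a * (arctan (a ^ (-c)) + π / 4) ≤ a * (arctan (P ^ (-c)) + arctan (t ^ (-c))) :=
      mul_le_mul_of_nonneg_left key h0
    have h3 : P * (t * arctan (t ^ (-c))) = a * arctan (t ^ (-c)) := by
      rw [← mul_assoc, hPt]
    nlinarith [h2]

theorem tEntropy_joint_le_sum {n m : ℕ} (c : ℝ) (hc : 0 < c)
    (p : Fin n → Fin m → ℝ) (hp : ∀ i j, 0 ≤ p i j)
    (hsum : ∑ i, ∑ j, p i j = 1) :
    tEntropyJoint c p ≤ tEntropyMargX c p + tEntropyMargY c p := by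
  have hP0 : ∀ i, 0 ≤ ∑ k, p i k := fun i => Finset.sum_nonneg fun k _ => hp i k
  have hP1 : ∀ i, (∑ k, p i k) ≤ 1 := by
    intro i
    rw [← hsum]
    exact Finset.single_le_sum (fun i' _ => hP0 i') (Finset.mem_univ i)
  have hale : ∀ i j, p i j ≤ ∑ k, p i k := fun i j =>
    Finset.single_le_sum (fun k _ => hp i k) (Finset.mem_univ j)
  -- Step 1 : chain rule bound, cell by cell
  have step : (∑ i, ∑ j, p i j * arctan ((p i j) ^ (-c)))
      ≤ ∑ i, ∑ j, (p i j * arctan ((∑ k, p i k) ^ (-c))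
          + (∑ k, p i k) * ((p i j / ∑ k, p i k) * arctan ((p i j / ∑ k, p i k) ^ (-c)))
          - p i j * (π / 4)) :=
    Finset.sum_le_sum fun i _ => Finset.sum_le_sum fun j _ =>
      tEntropy_step1 hc (hp i j) (hale i j) (hP1 i)
  -- split the right-hand side
  have expand : (∑ i, ∑ j, (p i j * arctan ((∑ k, p i k) ^ (-c))
          + (∑ k, p i k) * ((p i j / ∑ k, p i k) * arctan ((p i j / ∑ k, p i k) ^ (-c)))
          - p i j * (π / 4)))
      = (∑ i, (∑ j, p i j) * arctan ((∑ k, p i k) ^ (-c)))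
        + (∑ j, ∑ i, (∑ k, p i k) * ((p i j / ∑ k, p i k)
            * arctan ((p i j / ∑ k, p i k) ^ (-c))))
        - π / 4 := by
    simp only [Finset.sum_sub_distrib, Finset.sum_add_distrib]
    congr 1
    · congr 1
      · exact Finset.sum_congr rfl fun i _ => by rw [← Finset.sum_mul]
      · exact Finset.sum_comm
    · calc (∑ i, ∑ j, p i j * (π / 4)) = (∑ i, ∑ j, p i j) * (π / 4) := by
            simp only [← Finset.sum_mul]
        _ = π / 4 := by rw [hsum, one_mul]
  -- Step 2 : Jensen, column by column
  have jensen : ∀ j, (∑ i, (∑ k, p i k) * ((p i j / ∑ k, p i k)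
        * arctan ((p i j / ∑ k, p i k) ^ (-c))))
      ≤ (∑ i, p i j) * arctan ((∑ i, p i j) ^ (-c)) := by
    intro j
    have hmem : ∀ i ∈ Finset.univ, (p i j / ∑ k, p i k) ∈ Set.Icc (0:ℝ) 1 := by
      intro i _
      constructor
      · exact div_nonneg (hp i j) (hP0 i)
      · rcases eq_or_lt_of_le (hP0 i) with h | h
        · rw [← h, div_zero]; norm_num
        · exact (div_le_one h).mpr (hale i j)
    have hj := (tEntropy_concaveF hc).le_map_sum (fun i _ => hP0 i) hsum hmem
    simp only [smul_eq_mul] at hj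
    have hkey : (∑ i, (∑ k, p i k) * (p i j / ∑ k, p i k)) = ∑ i, p i j := by
      apply Finset.sum_congr rfl
      intro i _
      rcases eq_or_lt_of_le (hP0 i) with h | h
      · have hz : p i j = 0 := le_antisymm (h ▸ hale i j) (hp i j)
        rw [hz, ← h]
        simp
      · rw [mul_comm, div_mul_cancel₀ _ h.ne']
    rw [hkey] at hj
    exact hj
  have step2 : (∑ j, ∑ i, (∑ k, p i k) * ((p i j / ∑ k, p i k)
        * arctan ((p i j / ∑ k, p i k) ^ (-c))))
      ≤ ∑ j, (∑ i, p i j) * arctan ((∑ i, p i j) ^ (-c)) :=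
    Finset.sum_le_sum fun j _ => jensen j
  rw [expand] at step
  simp only [tEntropyJoint, tEntropyMargX, tEntropyMargY]
  linarith
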